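/- Let ((X_t)_{t≥0}, (L^t_1,…,L^t_n)_{t≥0}) be an instance of an n-dimensional GLexRSM for a stopping time T, fix 1 ≤ k ≤ n and s, M ∈ ℕ, and define D = {ω ∈ Ω | X_s[k](ω) ≤ M and ω ∈ ∪_{j=k}^n L^s_j} and F(ω) = inf{t ≥ s | ω ∉ ∪_{j'=k}^n L^t_{j'}}. Then Σ_{r=s}^∞ P[L^r_k ∩ D ∩ {F > r}] ≤ M·P[D] < ∞; in particular, Σ_{r=s}^∞ P[L^r_k ∩ D ∩ {F = ∞}] ≤ M·P[D] < ∞. -/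

import Mathlib

open MeasureTheory Set
open scoped Classical
open scoped ENNReal

/-- An instance of an `n`-dimensional generalized lexicographic ranking supermartingale
(GLexRSM) for a stopping time `T` (with values in `ℕ∞`): the process `X` together with the
`ℱ t`-measurable sets `L t j` partitioning `{T > t}`, satisfying measurability/integrability,
the lexicographic expected decrease conditions, partial non-negativity, and expected leftward
non-negativity. -/
def IsGLexRSMInstance {Ω : Type*} {m : MeasurableSpace Ω} (μ : Measure Ω)
    (ℱ : Filtration ℕ m) (T : Ω → ℕ∞) {n : ℕ}
    (X : ℕ → Fin n → Ω → ℝ) (L : ℕ → Fin n → Set Ω) : Prop :=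
  -- the sets `L t j` partition `{T > t}`
  (∀ t : ℕ, (⋃ j, L t j) = {ω | (t : ℕ∞) < T ω}) ∧
  (∀ t : ℕ, ∀ j j' : Fin n, j ≠ j' → Disjoint (L t j) (L t j')) ∧
  (∀ t : ℕ, ∀ j : Fin n, MeasurableSet[ℱ t] (L t j)) ∧
  -- (1) each `X t j` is `ℱ t`-measurable
  (∀ t : ℕ, ∀ j : Fin n, StronglyMeasurable[ℱ t] (X t j)) ∧
  -- (2) the relevant conditional expectations exist: each `X t j` is integrable
  (∀ t : ℕ, ∀ j : Fin n, Integrable (X t j) μ) ∧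
  -- (3a) expected non-increase on `⋃_{j' ≥ j} L t j'`
  (∀ t : ℕ, ∀ j : Fin n, ∀ ω ∈ ⋃ j' ≥ j, L t j',
      (μ[X (t + 1) j | ℱ t]) ω ≤ X t j ω) ∧
  -- (3b) expected decrease by 1 on `L t j`
  (∀ t : ℕ, ∀ j : Fin n, ∀ ω ∈ L t j,
      (μ[X (t + 1) j | ℱ t]) ω ≤ X t j ω - 1) ∧
  -- (3c) non-negativity on `⋃_{j' ≥ j} L t j'`
  (∀ t : ℕ, ∀ j : Fin n, ∀ ω ∈ ⋃ j' ≥ j, L t j', 0 ≤ X t j ω) ∧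
  -- (3d) expected leftward non-negativity, where `L (t+1) 0 = {T ≤ t+1}`
  (∀ t : ℕ, ∀ j : Fin n, ∀ ω ∈ ⋃ j' ≥ j, L t j',
      0 ≤ (μ[Set.indicator
              ({ω' | T ω' ≤ ((t + 1 : ℕ) : ℕ∞)} ∪ ⋃ j' < j, L (t + 1) j')
              (X (t + 1) j) | ℱ t]) ω)

/-- For a GLexRSM instance with the auxiliary data `D`, `F` (and the integrable auxiliary
process `Y`), the series `Σ_{r=s}^∞ P[L r k ∩ D ∩ {F > r}]` is bounded by `M · P[D] < ∞`;
in particular so is `Σ_{r=s}^∞ P[L r k ∩ D ∩ {F = ∞}]`. -/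
theorem glexrsm_borel_cantelli_sum_bound
    {Ω : Type*} {m : MeasurableSpace Ω} (μ : Measure Ω) [IsProbabilityMeasure μ]
    (ℱ : Filtration ℕ m) (T : Ω → ℕ∞)
    (hT : ∀ t : ℕ, MeasurableSet[ℱ t] {ω | T ω ≤ (t : ℕ∞)})
    {n : ℕ} (X : ℕ → Fin n → Ω → ℝ) (L : ℕ → Fin n → Set Ω)
    (hinst : IsGLexRSMInstance μ ℱ T X L)
    (k : Fin n) (s M : ℕ)
    (D : Set Ω) (hD : D = {ω | X s k ω ≤ (M : ℝ) ∧ ω ∈ ⋃ j ≥ k, L s j})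
    (F : Ω → ℕ∞)
    (hF : ∀ ω, F ω = sInf {u : ℕ∞ | ∃ r : ℕ, u = (r : ℕ∞) ∧ s ≤ r ∧ ω ∉ ⋃ j' ≥ k, L r j'})
    (Y : ℕ → Ω → ℝ)
    (hY : ∀ t ω, Y t ω =
      if ω ∈ D then
        (if t < s then (M : ℝ)
         else if (t : ℕ∞) < F ω then X t k ω
         else X (F ω).toNat k ω)
      else 0)
    (hYint : ∀ t, Integrable (Y t) μ) :
    (∑' r : ℕ, μ (L (s + r) k ∩ D ∩ {ω | ((s + r : ℕ) : ℕ∞) < F ω}) ≤ (M : ℝ≥0∞) * μ D) ∧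
    (M : ℝ≥0∞) * μ D < ⊤ ∧
    (∑' r : ℕ, μ (L (s + r) k ∩ D ∩ {ω | F ω = ⊤}) ≤ (M : ℝ≥0∞) * μ D) := by
  clear hY hYint
  obtain ⟨hpart, hdisjL, hLmeas, hXmeas, hXint, h3a, h3b, h3c, h3d⟩ := hinst
  set U : ℕ → Set Ω := fun r => ⋃ j' ≥ k, L r j' with hUdef
  have hUmeas : ∀ r, MeasurableSet[ℱ r] (U r) :=
    fun r => MeasurableSet.iUnion fun j' => MeasurableSet.iUnion fun _ => hLmeas r j'
  have hUm : ∀ r, MeasurableSet (U r) := fun r => ℱ.le r _ (hUmeas r)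
  have hLm : ∀ r (j : Fin n), MeasurableSet (L r j) := fun r j => ℱ.le r _ (hLmeas r j)
  -- characterization of `t < F ω`
  have hltF : ∀ (t : ℕ) (ω : Ω), (t : ℕ∞) < F ω ↔ ∀ r : ℕ, s ≤ r → r ≤ t → ω ∈ U r := by
    intro t ω
    rw [hF ω]
    constructor
    · intro h r hsr hrt
      by_contra hmem
      have h1 : sInf {u : ℕ∞ | ∃ r : ℕ, u = (r : ℕ∞) ∧ s ≤ r ∧ ω ∉ U r} ≤ (r : ℕ∞) :=
        sInf_le ⟨r, rfl, hsr, hmem⟩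
      have h2 : (t : ℕ∞) < (r : ℕ∞) := lt_of_lt_of_le h h1
      exact absurd h2 (not_lt.mpr (by exact_mod_cast hrt))
    · intro h
      have h1 : ((t + 1 : ℕ) : ℕ∞) ≤
          sInf {u : ℕ∞ | ∃ r : ℕ, u = (r : ℕ∞) ∧ s ≤ r ∧ ω ∉ U r} := by
        apply le_sInf
        rintro u ⟨r, rfl, hsr, hmem⟩
        have hr : t + 1 ≤ r := by
          by_contra hc
          push_neg at hc
          exact hmem (h r hsr (Nat.lt_succ_iff.mp hc))
        exact_mod_cast hr
      exact lt_of_lt_of_le (by exact_mod_cast Nat.lt_succ_self t) h1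
  have hDeq : D = {ω | X s k ω ≤ (M : ℝ)} ∩ U s := by
    rw [hD]; rfl
  have hDmeas : MeasurableSet[ℱ s] D := by
    rw [hDeq]
    exact (((hXmeas s k).measurable) measurableSet_Iic).inter (hUmeas s)
  have hDsubU : D ⊆ U s := by rw [hDeq]; exact Set.inter_subset_right
  -- the sets `G t = D ∩ {t < F}`
  set G : ℕ → Set Ω := fun t => D ∩ {ω | (t : ℕ∞) < F ω} with hGdef
  have hFset : ∀ t : ℕ, {ω | (t : ℕ∞) < F ω} =
      ⋂ (r : ℕ), ⋂ (_ : s ≤ r ∧ r ≤ t), U r := by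
    intro t
    ext ω
    simp only [Set.mem_setOf_eq, Set.mem_iInter, and_imp]
    exact hltF t ω
  have hGmeas : ∀ t, s ≤ t → MeasurableSet[ℱ t] (G t) := by
    intro t ht
    refine (ℱ.mono ht _ hDmeas).inter ?_
    rw [hFset t]
    exact MeasurableSet.iInter fun r => MeasurableSet.iInter fun hr => ℱ.mono hr.2 _ (hUmeas r)
  have hGm : ∀ t, s ≤ t → MeasurableSet (G t) := fun t ht => ℱ.le t _ (hGmeas t ht)
  have hGsubU : ∀ t, s ≤ t → G t ⊆ U t := fun t ht ω hω => (hltF t ω).mp hω.2 t ht le_rfl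
  have hGsucc : ∀ t, s ≤ t → G (t + 1) = G t ∩ U (t + 1) := by
    intro t ht
    ext ω
    simp only [hGdef, Set.mem_inter_iff, Set.mem_setOf_eq]
    constructor
    · rintro ⟨hDω, hlt⟩
      have h1 := (hltF (t + 1) ω).mp hlt
      exact ⟨⟨hDω, (hltF t ω).mpr fun r hr hrt => h1 r hr (le_trans hrt (Nat.le_succ t))⟩,
        h1 (t + 1) (le_trans ht (Nat.le_succ t)) le_rfl⟩
    · rintro ⟨⟨hDω, hlt⟩, hU1⟩
      refine ⟨hDω, (hltF (t + 1) ω).mpr fun r hr hrt => ?_⟩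
      rcases Nat.lt_succ_iff_lt_or_eq.mp (Nat.lt_succ_of_le hrt) with h | h
      · exact (hltF t ω).mp hlt r hr (Nat.lt_succ_iff.mp h)
      · rw [h]; exact hU1
  have hGs : G s = D := by
    ext ω
    simp only [hGdef, Set.mem_inter_iff, Set.mem_setOf_eq]
    refine ⟨fun h => h.1, fun h => ⟨h, (hltF s ω).mpr fun r hr hrt => ?_⟩⟩
    have : r = s := le_antisymm hrt hr
    rw [this]
    exact hDsubU h
  -- the complement of `U (t+1)` is the set appearing in condition (3d)
  have hUcompl : ∀ t : ℕ, (U (t + 1))ᶜ =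
      {ω' | T ω' ≤ ((t + 1 : ℕ) : ℕ∞)} ∪ ⋃ j' < k, L (t + 1) j' := by
    intro t
    ext ω
    simp only [Set.mem_compl_iff, Set.mem_union, Set.mem_setOf_eq, Set.mem_iUnion]
    constructor
    · intro hn
      by_cases hT' : T ω ≤ ((t + 1 : ℕ) : ℕ∞)
      · exact Or.inl hT'
      · have h1 : ω ∈ ⋃ j, L (t + 1) j := by
          rw [hpart (t + 1)]
          exact lt_of_not_ge hT'
        obtain ⟨j, hj⟩ := Set.mem_iUnion.mp h1
        rcases lt_or_ge j k with hjk | hjk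
        · exact Or.inr ⟨j, hjk, hj⟩
        · exact absurd (Set.mem_iUnion.mpr ⟨j, Set.mem_iUnion.mpr ⟨hjk, hj⟩⟩) hn
    · rintro (hle | ⟨j, hjk, hj⟩) hmem
      · obtain ⟨j', hj'⟩ := Set.mem_iUnion.mp hmem
        obtain ⟨hkj', hj'mem⟩ := Set.mem_iUnion.mp hj'
        have h1 : ω ∈ ⋃ j, L (t + 1) j := Set.mem_iUnion.mpr ⟨j', hj'mem⟩
        rw [hpart (t + 1)] at h1
        exact absurd hle (not_le.mpr h1)
      · obtain ⟨j', hj'⟩ := Set.mem_iUnion.mp hmem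
        obtain ⟨hkj', hj'mem⟩ := Set.mem_iUnion.mp hj'
        exact Set.disjoint_left.mp
          (hdisjL (t + 1) j j' (ne_of_lt (lt_of_lt_of_le hjk hkj'))) hj hj'mem
  -- the key supermartingale-type step
  have key : ∀ t, s ≤ t →
      ∫ ω in G (t + 1), X (t + 1) k ω ∂μ ≤
        ∫ ω in G t, X t k ω ∂μ - (μ (L t k ∩ G t)).toReal := by
    intro t ht
    have hGm' := hGm t ht
    -- split `G t` into `G (t+1)` and the leaving part
    have hsplit : G t = G (t + 1) ∪ (G t ∩ (U (t + 1))ᶜ) := by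
      rw [hGsucc t ht]
      rw [Set.inter_union_compl]
    have hdisj2 : Disjoint (G (t + 1)) (G t ∩ (U (t + 1))ᶜ) := by
      refine Set.disjoint_left.mpr fun ω h1 h2 => h2.2 ?_
      rw [hGsucc t ht] at h1
      exact h1.2
    have hint1 : ∫ ω in G t, X (t + 1) k ω ∂μ =
        ∫ ω in G (t + 1), X (t + 1) k ω ∂μ + ∫ ω in G t ∩ (U (t + 1))ᶜ, X (t + 1) k ω ∂μ := by
      conv_lhs => rw [hsplit]
      exact setIntegral_union hdisj2 (hGm'.inter (hUm (t + 1)).compl)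
        ((hXint (t + 1) k).integrableOn) ((hXint (t + 1) k).integrableOn)
    -- the leaving part has nonnegative integral, by (3d)
    have hpos : 0 ≤ ∫ ω in G t ∩ (U (t + 1))ᶜ, X (t + 1) k ω ∂μ := by
      have e1 : ∫ ω in G t ∩ (U (t + 1))ᶜ, X (t + 1) k ω ∂μ =
          ∫ ω in G t, ((U (t + 1))ᶜ).indicator (X (t + 1) k) ω ∂μ :=
        (setIntegral_indicator (hUm (t + 1)).compl).symm
      have hindint : Integrable (((U (t + 1))ᶜ).indicator (X (t + 1) k)) μ :=
        (hXint (t + 1) k).indicator (hUm (t + 1)).compl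
      have e2 : ∫ ω in G t, ((U (t + 1))ᶜ).indicator (X (t + 1) k) ω ∂μ =
          ∫ ω in G t, (μ[((U (t + 1))ᶜ).indicator (X (t + 1) k) | ℱ t]) ω ∂μ :=
        (setIntegral_condExp (ℱ.le t) hindint (hGmeas t ht)).symm
      rw [e1, e2]
      refine setIntegral_nonneg hGm' fun ω hω => ?_
      have h4 := h3d t k ω (hGsubU t ht hω)
      rwa [← hUcompl t] at h4
    -- conditional expectation step using (3a) and (3b)
    have hcond : ∫ ω in G t, X (t + 1) k ω ∂μ =
        ∫ ω in G t, (μ[X (t + 1) k | ℱ t]) ω ∂μ :=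
      (setIntegral_condExp (ℱ.le t) (hXint (t + 1) k) (hGmeas t ht)).symm
    have hindint2 : Integrable ((L t k).indicator (fun _ => (1 : ℝ))) μ :=
      (integrable_const (1 : ℝ)).indicator (hLm t k)
    have hmono : ∫ ω in G t, (μ[X (t + 1) k | ℱ t]) ω ∂μ ≤
        ∫ ω in G t, (X t k ω - (L t k).indicator (fun _ => (1 : ℝ)) ω) ∂μ := by
      refine setIntegral_mono_on (integrable_condExp.integrableOn)
        (((hXint t k).sub hindint2).integrableOn) hGm' fun ω hω => ?_
      by_cases hωL : ω ∈ L t k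
      · rw [Set.indicator_of_mem hωL]
        exact h3b t k ω hωL
      · rw [Set.indicator_of_notMem hωL, sub_zero]
        exact h3a t k ω (hGsubU t ht hω)
    have hsub : ∫ ω in G t, (X t k ω - (L t k).indicator (fun _ => (1 : ℝ)) ω) ∂μ =
        ∫ ω in G t, X t k ω ∂μ - ∫ ω in G t, (L t k).indicator (fun _ => (1 : ℝ)) ω ∂μ :=
      integral_sub ((hXint t k).integrableOn) (hindint2.integrableOn)
    have hind : ∫ ω in G t, (L t k).indicator (fun _ => (1 : ℝ)) ω ∂μ =
        (μ (L t k ∩ G t)).toReal := by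
      rw [setIntegral_indicator (hLm t k), setIntegral_const, smul_eq_mul, mul_one,
        Set.inter_comm]
      rfl
    have h5 : ∫ ω in G (t + 1), X (t + 1) k ω ∂μ ≤ ∫ ω in G t, X (t + 1) k ω ∂μ := by
      rw [hint1]; linarith
    calc ∫ ω in G (t + 1), X (t + 1) k ω ∂μ ≤ ∫ ω in G t, X (t + 1) k ω ∂μ := h5
      _ = ∫ ω in G t, (μ[X (t + 1) k | ℱ t]) ω ∂μ := hcond
      _ ≤ ∫ ω in G t, (X t k ω - (L t k).indicator (fun _ => (1 : ℝ)) ω) ∂μ := hmono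
      _ = ∫ ω in G t, X t k ω ∂μ - (μ (L t k ∩ G t)).toReal := by rw [hsub, hind]
  -- nonnegativity of the integrals, by (3c)
  have hnonneg : ∀ t, s ≤ t → 0 ≤ ∫ ω in G t, X t k ω ∂μ := fun t ht =>
    setIntegral_nonneg (hGm t ht) fun ω hω => h3c t k ω (hGsubU t ht hω)
  -- base bound
  have hDm : MeasurableSet D := ℱ.le s _ hDmeas
  have hbase : ∫ ω in G s, X s k ω ∂μ ≤ (M : ℝ) * (μ D).toReal := by
    rw [hGs]
    calc ∫ ω in D, X s k ω ∂μ ≤ ∫ _ω in D, (M : ℝ) ∂μ := by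
          refine setIntegral_mono_on ((hXint s k).integrableOn)
            ((integrableOn_const_iff (C := (M : ℝ))).mpr (Or.inr (measure_lt_top μ D))) hDm fun ω hω => ?_
          rw [hD] at hω
          exact hω.1
      _ = (M : ℝ) * (μ D).toReal := by rw [setIntegral_const, smul_eq_mul, mul_comm]; rfl
  -- partial sum bound by induction
  have hsum : ∀ N : ℕ, ∑ r ∈ Finset.range N, (μ (L (s + r) k ∩ G (s + r))).toReal ≤
      (M : ℝ) * (μ D).toReal := by
    intro N
    have h1 : ∀ N : ℕ, ∑ r ∈ Finset.range N, (μ (L (s + r) k ∩ G (s + r))).toReal +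
        ∫ ω in G (s + N), X (s + N) k ω ∂μ ≤ ∫ ω in G s, X s k ω ∂μ := by
      intro N
      induction N with
      | zero => simp
      | succ N ih =>
        rw [Finset.sum_range_succ]
        have e : s + (N + 1) = (s + N) + 1 := rfl
        rw [e]
        have h2 := key (s + N) (Nat.le_add_right s N)
        linarith
    have h2 := h1 N
    have h3 := hnonneg (s + N) (Nat.le_add_right s N)
    linarith
  -- convert to the `ℝ≥0∞` statement
  have hEeq : ∀ r : ℕ, L (s + r) k ∩ D ∩ {ω | ((s + r : ℕ) : ℕ∞) < F ω} =
      L (s + r) k ∩ G (s + r) := fun r => Set.inter_assoc _ _ _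
  have hMD : (M : ℝ≥0∞) * μ D ≠ ⊤ :=
    ENNReal.mul_ne_top (ENNReal.natCast_ne_top M) (measure_ne_top μ D)
  have hmain : ∑' r : ℕ, μ (L (s + r) k ∩ D ∩ {ω | ((s + r : ℕ) : ℕ∞) < F ω}) ≤
      (M : ℝ≥0∞) * μ D := by
    simp_rw [hEeq]
    rw [ENNReal.tsum_eq_iSup_sum]
    refine iSup_le fun fs => ?_
    have hfs : fs ⊆ Finset.range (fs.sup id + 1) :=
      fun x hx => Finset.mem_range.mpr (Nat.lt_succ_of_le (Finset.le_sup (f := id) hx))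
    calc ∑ r ∈ fs, μ (L (s + r) k ∩ G (s + r)) ≤
        ∑ r ∈ Finset.range (fs.sup id + 1), μ (L (s + r) k ∩ G (s + r)) :=
          Finset.sum_le_sum_of_subset hfs
      _ ≤ (M : ℝ≥0∞) * μ D := by
          set N := fs.sup id + 1
          have hne : ∀ r ∈ Finset.range N, μ (L (s + r) k ∩ G (s + r)) ≠ ⊤ :=
            fun r _ => measure_ne_top μ _
          have hsumne : ∑ r ∈ Finset.range N, μ (L (s + r) k ∩ G (s + r)) ≠ ⊤ :=
            ENNReal.sum_ne_top.mpr hne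
          rw [← ENNReal.toReal_le_toReal hsumne hMD, ENNReal.toReal_sum hne,
            ENNReal.toReal_mul, ENNReal.toReal_natCast]
          exact hsum N
  refine ⟨hmain, lt_of_le_of_ne le_top hMD, ?_⟩
  refine le_trans (ENNReal.tsum_le_tsum fun r => measure_mono fun ω hω => ?_) hmain
  refine ⟨hω.1, ?_⟩
  have h7 : F ω = ⊤ := hω.2
  rw [Set.mem_setOf_eq, h7]
  exact ENat.coe_lt_top (s + r)
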